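/- Let X ∈ ℝ^{d×n} be a matrix with no zero rows, let Λ be the diagonal d×d matrix with Λ_{ii} equal to the squared Euclidean norm of the i-th row of X, let γ₁ > 0, and let P = (X·Xᵀ + γ₁·Λ)⁻¹ · X·Xᵀ. Then the spectral norm (largest singular value) of P satisfies ‖P‖₂ ≤ λ_d(X·Xᵀ) / (γ₁·λ₁(Λ) + λ₁(X·Xᵀ)), where λ₁(X·Xᵀ) and λ_d(X·Xᵀ) are the smallest and largest eigenvalues of X·Xᵀ and λ₁(Λ) is the smallest diagonal entry of Λ. -/

import Mathlib

set_option maxHeartbeats 1000000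

open Matrix

lemma star_eq_transpose' {d : ℕ} (U : Matrix (Fin d) (Fin d) ℝ) : star U = Uᵀ := by
  ext i j; simp [Matrix.star_eq_conjTranspose, conjTranspose_apply]

lemma conjTranspose_real {m n : Type*} (X : Matrix m n ℝ) : Xᴴ = Xᵀ := by
  ext i j; simp [conjTranspose_apply]

lemma dp_cs {d : ℕ} (x y : Fin d → ℝ) : (x ⬝ᵥ y)^2 ≤ (x ⬝ᵥ x) * (y ⬝ᵥ y) := by
  simpa [dotProduct, sq] using Finset.sum_mul_sq_le_sq_mul_sq Finset.univ x y

lemma dp_self_nonneg {d : ℕ} (x : Fin d → ℝ) : 0 ≤ x ⬝ᵥ x :=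
  Finset.sum_nonneg fun j _ => mul_self_nonneg (x j)

lemma psd_cs {d : ℕ} {A : Matrix (Fin d) (Fin d) ℝ} (hA : A.PosSemidef) (x y : Fin d → ℝ) :
    (x ⬝ᵥ (A *ᵥ y))^2 ≤ (x ⬝ᵥ (A *ᵥ x)) * (y ⬝ᵥ (A *ᵥ y)) := by
  obtain ⟨B, hB⟩ : ∃ B : Matrix (Fin d) (Fin d) ℝ, A = star B * B := by
    open scoped MatrixOrder in exact CStarAlgebra.nonneg_iff_eq_star_mul_self.mp hA.nonneg
  have key : ∀ a b : Fin d → ℝ, a ⬝ᵥ (A *ᵥ b) = (B *ᵥ a) ⬝ᵥ (B *ᵥ b) := by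
    intro a b
    rw [hB, star_eq_transpose', ← mulVec_mulVec, dotProduct_mulVec (A := Bᵀ), ← mulVec_transpose,
      transpose_transpose]
  rw [key, key, key]; exact dp_cs _ _

lemma rayleigh_bounds {d : ℕ} [Nonempty (Fin d)] {A : Matrix (Fin d) (Fin d) ℝ}
    (hA : A.IsHermitian) (z : Fin d → ℝ) :
    (⨅ j, hA.eigenvalues j) * (z ⬝ᵥ z) ≤ z ⬝ᵥ (A *ᵥ z) ∧
      z ⬝ᵥ (A *ᵥ z) ≤ (⨆ j, hA.eigenvalues j) * (z ⬝ᵥ z) := by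
  set U : Matrix (Fin d) (Fin d) ℝ := (IsHermitian.eigenvectorUnitary hA : Matrix (Fin d) (Fin d) ℝ) with hU
  set c : Fin d → ℝ := star U *ᵥ z with hc
  have hUU : U * star U = 1 := (Matrix.mem_unitaryGroup_iff).mp (IsHermitian.eigenvectorUnitary hA).2
  have key : z ⬝ᵥ (A *ᵥ z) = ∑ j, hA.eigenvalues j * (c j)^2 := by
    conv_lhs => rw [hA.spectral_theorem, Unitary.conjStarAlgAut_apply]
    rw [← mulVec_mulVec, ← mulVec_mulVec, dotProduct_mulVec (A := U), ← mulVec_transpose,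
      ← star_eq_transpose']
    simp [mulVec_diagonal, dotProduct, sq, mul_comm, mul_left_comm, hc]; rfl
  have hzz : z ⬝ᵥ z = ∑ j, (c j)^2 := by
    have : c ⬝ᵥ c = z ⬝ᵥ ((star U)ᵀ * star U) *ᵥ z := by
      rw [hc, ← mulVec_mulVec, dotProduct_mulVec (A := (star U)ᵀ), ← mulVec_transpose, transpose_transpose]
    have h2 : (star U)ᵀ * star U = 1 := by
      rw [star_eq_transpose', transpose_transpose, ← star_eq_transpose', hUU]
    rw [show (∑ j, (c j)^2) = c ⬝ᵥ c by simp [dotProduct, sq], this, h2, one_mulVec]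
  constructor
  · rw [key, hzz, Finset.mul_sum]
    exact Finset.sum_le_sum fun j _ => mul_le_mul_of_nonneg_right
      (ciInf_le (Set.Finite.bddBelow (Set.finite_range _)) j) (sq_nonneg _)
  · rw [key, hzz, Finset.mul_sum]
    exact Finset.sum_le_sum fun j _ => mul_le_mul_of_nonneg_right
      (le_ciSup (Set.Finite.bddAbove (Set.finite_range _)) j) (sq_nonneg _)

/-- Every singular value of `P = (XXᵀ + γ₁Λ)⁻¹ XXᵀ` (i.e. the square root of any
eigenvalue of `PPᵀ`), and in particular the spectral norm of `P`, is at most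
`λ_d(XXᵀ) / (γ₁·λ₁(Λ) + λ₁(XXᵀ))`, where `Λ` is the diagonal matrix of squared row
norms of `X` and `X` has no zero rows. -/
theorem singular_values_of_P_bounded {d n : ℕ} (hd : 0 < d)
    (X : Matrix (Fin d) (Fin n) ℝ)
    (hrows : ∀ i, ∃ j, X i j ≠ 0)
    (v : Fin d → ℝ) (hv : ∀ i, v i = ∑ j, X i j ^ 2)
    (hH : (X * Xᵀ).IsHermitian) (γ₁ : ℝ) (hγ₁ : 0 < γ₁)
    (P : Matrix (Fin d) (Fin d) ℝ)
    (hP : P = (X * Xᵀ + γ₁ • Matrix.diagonal v)⁻¹ * (X * Xᵀ))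
    (hPPt : (P * Pᵀ).IsHermitian) :
    ∀ i, Real.sqrt (hPPt.eigenvalues i) ≤
      (⨆ j, hH.eigenvalues j) / (γ₁ * (⨅ j, v j) + ⨅ j, hH.eigenvalues j) := by
  haveI : Nonempty (Fin d) := Fin.pos_iff_nonempty.mp hd
  intro i
  set A : Matrix (Fin d) (Fin d) ℝ := X * Xᵀ with hAdef
  have hA : A.PosSemidef := by
    have := Matrix.posSemidef_self_mul_conjTranspose X
    rwa [conjTranspose_real] at this
  have hvpos : ∀ i, 0 < v i := by
    intro k
    obtain ⟨j, hj⟩ := hrows k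
    rw [hv k]
    exact Finset.sum_pos' (fun _ _ => sq_nonneg _) ⟨j, Finset.mem_univ j, by positivity⟩
  set M : Matrix (Fin d) (Fin d) ℝ := A + γ₁ • Matrix.diagonal v with hMdef
  have hΛpd : (γ₁ • Matrix.diagonal v : Matrix (Fin d) (Fin d) ℝ).PosDef := by
    have : (γ₁ • Matrix.diagonal v : Matrix (Fin d) (Fin d) ℝ) = Matrix.diagonal (γ₁ • v) := by
      rw [diagonal_smul]
    rw [this]
    exact Matrix.posDef_diagonal_iff.mpr fun k => mul_pos hγ₁ (hvpos k)
  have hMpd : M.PosDef := Matrix.PosDef.posSemidef_add hA hΛpd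
  have hdet : IsUnit M.det := hMpd.det_pos.ne'.isUnit
  have hMMinv : M * M⁻¹ = 1 := mul_nonsing_inv M hdet
  have hAt : Aᵀ = A := by rw [← conjTranspose_real]; exact hH
  have hMt : Mᵀ = M := by
    rw [hMdef, transpose_add, hAt, transpose_smul, diagonal_transpose]
  have hPt : Pᵀ = A * M⁻¹ := by
    rw [hP, transpose_mul, transpose_nonsing_inv, hMt, hAt]
  set w : Fin d → ℝ := ⇑(hPPt.eigenvectorBasis i) with hwdef
  set μ : ℝ := hPPt.eigenvalues i with hμdef
  have hw1 : w ⬝ᵥ w = 1 := by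
    have hn : ‖(hPPt.eigenvectorBasis i)‖ = 1 := hPPt.eigenvectorBasis.orthonormal.1 i
    rw [EuclideanSpace.norm_eq] at hn
    have hsum : ∑ j, ‖w j‖^2 = 1 := by
      have h := Real.sq_sqrt (Finset.sum_nonneg fun j (_ : j ∈ Finset.univ) => sq_nonneg ‖w j‖)
      have hn' : Real.sqrt (∑ j, ‖w j‖^2) = 1 := hn
      rw [hn'] at h
      simpa using h.symm
    calc w ⬝ᵥ w = ∑ j, ‖w j‖^2 := by
          simp [dotProduct, Real.norm_eq_abs, sq_abs, sq]
      _ = 1 := hsum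
  have heig : (P * Pᵀ) *ᵥ w = μ • w := hPPt.mulVec_eigenvectorBasis i
  set z : Fin d → ℝ := M⁻¹ *ᵥ w with hzdef
  set u : Fin d → ℝ := A *ᵥ z with hudef
  have hu : Pᵀ *ᵥ w = u := by rw [hPt, ← mulVec_mulVec]
  have hMz : M *ᵥ z = w := by rw [hzdef, mulVec_mulVec, hMMinv, one_mulVec]
  have hμu : μ = u ⬝ᵥ u := by
    calc μ = w ⬝ᵥ (μ • w) := by rw [dotProduct_smul, hw1, smul_eq_mul, mul_one]
      _ = w ⬝ᵥ ((P * Pᵀ) *ᵥ w) := by rw [heig]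
      _ = u ⬝ᵥ u := by
          rw [← mulVec_mulVec, dotProduct_mulVec (A := P), ← mulVec_transpose, hu]
  set β : ℝ := ⨆ j, hH.eigenvalues j with hβdef
  set ι : ℝ := ⨅ j, hH.eigenvalues j with hιdef
  set δ : ℝ := γ₁ * (⨅ j, v j) + ι with hδdef
  have hβ0 : 0 ≤ β := le_trans (hA.eigenvalues_nonneg (Classical.arbitrary (Fin d)))
    (le_ciSup (Set.Finite.bddAbove (Set.finite_range _)) _)
  have hι0 : 0 ≤ ι := le_ciInf fun j => hA.eigenvalues_nonneg j
  have hinfv : 0 < ⨅ j, v j := by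
    obtain ⟨j0, hj0⟩ := Finite.exists_min v
    exact lt_of_lt_of_le (hvpos j0) (le_ciInf hj0)
  have hδ : 0 < δ := add_pos_of_pos_of_nonneg (mul_pos hγ₁ hinfv) hι0
  -- Step B : z ⬝ᵥ z ≤ 1 / δ^2
  have hs0 : 0 ≤ z ⬝ᵥ z := dp_self_nonneg z
  have hMlow : δ * (z ⬝ᵥ z) ≤ z ⬝ᵥ (M *ᵥ z) := by
    have hdiag : (⨅ j, v j) * (z ⬝ᵥ z) ≤ z ⬝ᵥ (Matrix.diagonal v *ᵥ z) := by
      have h1 : z ⬝ᵥ (Matrix.diagonal v *ᵥ z) = ∑ j, v j * (z j)^2 := by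
        simp only [dotProduct, mulVec_diagonal]
        exact Finset.sum_congr rfl fun j _ => by ring
      rw [h1, show z ⬝ᵥ z = ∑ j, (z j)^2 by simp [dotProduct, sq], Finset.mul_sum]
      exact Finset.sum_le_sum fun j _ => mul_le_mul_of_nonneg_right
        (ciInf_le (Set.Finite.bddBelow (Set.finite_range _)) j) (sq_nonneg _)
    have hAr : ι * (z ⬝ᵥ z) ≤ z ⬝ᵥ (A *ᵥ z) := (rayleigh_bounds hH z).1
    have hexp : z ⬝ᵥ (M *ᵥ z) = z ⬝ᵥ (A *ᵥ z) + γ₁ * (z ⬝ᵥ (Matrix.diagonal v *ᵥ z)) := by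
      rw [hMdef, add_mulVec, dotProduct_add, smul_mulVec, dotProduct_smul, smul_eq_mul]
    rw [hexp, hδdef]
    nlinarith [mul_le_mul_of_nonneg_left hdiag hγ₁.le]
  have hsB : z ⬝ᵥ z ≤ 1 / δ^2 := by
    have hzw : (z ⬝ᵥ w)^2 ≤ (z ⬝ᵥ z) := by
      have := dp_cs z w
      rwa [hw1, mul_one] at this
    have hMzw : z ⬝ᵥ (M *ᵥ z) = z ⬝ᵥ w := by rw [hMz]
    have h1 : (δ * (z ⬝ᵥ z))^2 ≤ (z ⬝ᵥ z) := by
      refine le_trans (pow_le_pow_left₀ (by positivity) (hMlow.trans_eq hMzw) 2 |>.trans hzw) le_rfl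
    rcases eq_or_lt_of_le hs0 with h0 | h0
    · rw [← h0]; positivity
    · rw [mul_pow] at h1
      rw [le_div_iff₀ (by positivity)]
      nlinarith
  -- Step A : u ⬝ᵥ u ≤ β^2 * (z ⬝ᵥ z)
  have hu0 : 0 ≤ u ⬝ᵥ u := dp_self_nonneg u
  have hA2 : u ⬝ᵥ u ≤ β^2 * (z ⬝ᵥ z) := by
    have hcs : (u ⬝ᵥ (A *ᵥ z))^2 ≤ (u ⬝ᵥ (A *ᵥ u)) * (z ⬝ᵥ (A *ᵥ z)) := psd_cs hA u z
    have h1 : u ⬝ᵥ (A *ᵥ u) ≤ β * (u ⬝ᵥ u) := (rayleigh_bounds hH u).2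
    have h2 : z ⬝ᵥ (A *ᵥ z) ≤ β * (z ⬝ᵥ z) := (rayleigh_bounds hH z).2
    have hqu : 0 ≤ u ⬝ᵥ (A *ᵥ u) := by
      have := hA.dotProduct_mulVec_nonneg u; simpa [star_trivial] using this
    have hqz : 0 ≤ z ⬝ᵥ (A *ᵥ z) := by
      have := hA.dotProduct_mulVec_nonneg z; simpa [star_trivial] using this
    have hmain : (u ⬝ᵥ u)^2 ≤ (β * (u ⬝ᵥ u)) * (β * (z ⬝ᵥ z)) := by
      calc (u ⬝ᵥ u)^2 = (u ⬝ᵥ (A *ᵥ z))^2 := by rw [← hudef]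
        _ ≤ (u ⬝ᵥ (A *ᵥ u)) * (z ⬝ᵥ (A *ᵥ z)) := hcs
        _ ≤ (β * (u ⬝ᵥ u)) * (β * (z ⬝ᵥ z)) := mul_le_mul h1 h2 hqz (by positivity)
    rcases eq_or_lt_of_le hu0 with h0 | h0
    · rw [← h0]; positivity
    · nlinarith
  -- finish
  have hμle : μ ≤ (β / δ)^2 := by
    rw [hμu]
    calc u ⬝ᵥ u ≤ β^2 * (z ⬝ᵥ z) := hA2
      _ ≤ β^2 * (1 / δ^2) := mul_le_mul_of_nonneg_left hsB (by positivity)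
      _ = (β / δ)^2 := by field_simp
  calc Real.sqrt μ ≤ Real.sqrt ((β / δ)^2) := Real.sqrt_le_sqrt hμle
    _ = β / δ := Real.sqrt_sq (by positivity)
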